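/- Let q be a super growth sequence, φ the associated dyadic cocycle over the dyadic odometer τ on Ω = {0,1}^{ℕ≥1} with Bernoulli(1/2) product measure P, and φ_N its N-step Birkhoff sum. Then for every integer n ≥ 1: if n = N(ε) for some ε ∈ ℰ⁺, then P({ω ∈ Ω : ∃ N ≥ 1 with φ_N(ω) = n}) = 2^{−‖ε‖}; and if n is not of the form N(ε) for any ε ∈ ℰ⁺, then P({ω ∈ Ω : ∃ N ≥ 1 with φ_N(ω) = n}) = 0. -/

import Mathlib

open Finset MeasureTheory


/-- A super growth sequence: strictly increasing positive integers (indexed by `n ≥ 1`)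
with `q n > 2·∑_{k=1}^{n-1} q k` (the value `q 0` is irrelevant). -/
def IsSuperGrowth (q : ℕ → ℕ) : Prop :=
  (∀ n, 1 ≤ n → 0 < q n) ∧ (∀ m n, 1 ≤ m → m < n → q m < q n) ∧
    ∀ n, 1 ≤ n → 2 * ∑ k ∈ Finset.Icc 1 (n - 1), q k < q n

/-- Membership in `ℰ`: finitely supported sequences `{1,2,...} → {−1,0,1}` (modelled as
functions on `ℕ` vanishing at the irrelevant index `0`). -/
def IsEps (ε : ℕ → ℤ) : Prop :=
  ε 0 = 0 ∧ (∀ k, ε k = -1 ∨ ε k = 0 ∨ ε k = 1) ∧ (Function.support ε).Finite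

/-- `N(ε) = ∑_{k ≥ 1} ε k · q k`. -/
noncomputable def Nval (q : ℕ → ℕ) (ε : ℕ → ℤ) : ℤ := ∑ᶠ k, ε k * (q k : ℤ)

/-- `‖ε‖ = ∑_{k ≥ 1} |ε k|`. -/
noncomputable def normE (ε : ℕ → ℤ) : ℕ := ∑ᶠ k, (ε k).natAbs

/-- `κ(ε) = max{k : ε k ≠ 0}` (junk value for `ε = 0`). -/
noncomputable def kap (ε : ℕ → ℤ) : ℕ := sSup (Function.support ε)

/-- Membership in `ℰ⁺`: nonzero `ε ∈ ℰ` with `ε (κ ε) = 1`. -/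
def IsEplus (ε : ℕ → ℤ) : Prop := IsEps ε ∧ ε ≠ 0 ∧ ε (kap ε) = 1

/-- `c n = min{k ≥ 1 : q k ≥ n}`. -/
noncomputable def cIdx (q : ℕ → ℕ) (n : ℕ) : ℕ := sInf {k | 1 ≤ k ∧ n ≤ q k}

/-- A growth sequence: strictly increasing positive integers (indexed by `n ≥ 1`) with
`q n > ∑_{k=1}^{n-1} q k` (the value `q 0` is irrelevant). -/
def IsGrowth (q : ℕ → ℕ) : Prop :=
  (∀ n, 1 ≤ n → 0 < q n) ∧ (∀ m n, 1 ≤ m → m < n → q m < q n) ∧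
    ∀ n, 1 ≤ n → ∑ k ∈ Finset.Icc 1 (n - 1), q k < q n

/-- `ℓ(ω) = min{n ≥ 1 : ω n = 0}`, where points of `Ω = {0,1}^{ℕ≥1}` are modelled as
functions `ℕ → Bool` whose value at the irrelevant index `0` is ignored (`ℓ` takes the
junk value `0` when no such `n` exists). -/
noncomputable def ell (ω : ℕ → Bool) : ℕ := sInf {n | 1 ≤ n ∧ ω n = false}

/-- The dyadic odometer `τ`: `τ(ω)(k) = 0` for `1 ≤ k < ℓ(ω)`, `τ(ω)(ℓ(ω)) = 1`,
`τ(ω)(k) = ω k` otherwise (in particular `τ` is the identity on the null set where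
`ℓ(ω) = 0`, and the irrelevant coordinate `0` is left unchanged). -/
noncomputable def odo (ω : ℕ → Bool) : ℕ → Bool := fun k =>
  if k = 0 then ω 0
  else if k < ell ω then false
  else if k = ell ω then true
  else ω k

/-- The dyadic cocycle `φ(ω) = q (ℓ ω) − ∑_{k=1}^{ℓ ω − 1} q k` (taking values in `ℤ`;
it is a positive integer off a null set). -/
noncomputable def phi (q : ℕ → ℕ) (ω : ℕ → Bool) : ℤ :=
  (q (ell ω) : ℤ) - ∑ k ∈ Finset.Icc 1 (ell ω - 1), (q k : ℤ)

/-- The Birkhoff sums `φ_N = ∑_{j=0}^{N−1} φ ∘ τ^j`. -/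
noncomputable def phiN (q : ℕ → ℕ) (N : ℕ) (ω : ℕ → Bool) : ℤ :=
  ∑ j ∈ Finset.range N, phi q (odo^[j] ω)

/-- Binary value of the first `M` coordinates. -/
def valM (ω : ℕ → Bool) (M : ℕ) : ℕ := ∑ k ∈ Finset.Icc 1 M, (ω k).toNat * 2 ^ (k - 1)

lemma valM_succ (ω : ℕ → Bool) (M : ℕ) :
    valM ω (M + 1) = valM ω M + (ω (M + 1)).toNat * 2 ^ M := by
  unfold valM
  rw [Finset.sum_Icc_succ_top (by omega)]
  simp

lemma geomIcc (m : ℕ) : ∑ k ∈ Finset.Icc 1 m, 2 ^ (k - 1) = 2 ^ m - 1 := by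
  induction m with
  | zero => simp
  | succ n ih =>
    rw [Finset.sum_Icc_succ_top (by omega), ih]
    have : 1 ≤ 2 ^ n := Nat.one_le_two_pow
    simp only [Nat.add_sub_cancel]
    omega

lemma valM_lt (ω : ℕ → Bool) (M : ℕ) : valM ω M < 2 ^ M := by
  have h : valM ω M ≤ ∑ k ∈ Finset.Icc 1 M, 2 ^ (k - 1) := by
    apply Finset.sum_le_sum
    intro i _
    rcases ω i with _ | _ <;> simp
  rw [geomIcc] at h
  have : 1 ≤ 2 ^ M := Nat.one_le_two_pow
  omega

lemma valM_full {ω : ℕ → Bool} {M : ℕ} (h : ∀ k, 1 ≤ k → k ≤ M → ω k = true) :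
    valM ω M = 2 ^ M - 1 := by
  rw [← geomIcc]
  apply Finset.sum_congr rfl
  intro k hk
  simp only [Finset.mem_Icc] at hk
  rw [h k hk.1 hk.2]
  simp

lemma exists_false_of_valM (ω : ℕ → Bool) (M : ℕ) (h : valM ω M + 1 < 2 ^ M) :
    ∃ k, 1 ≤ k ∧ k ≤ M ∧ ω k = false := by
  by_contra hc
  push_neg at hc
  have : ∀ k, 1 ≤ k → k ≤ M → ω k = true := by
    intro k h1 h2
    have := hc k h1 h2
    rcases hω : ω k with _ | _
    · exact absurd hω this
    · rfl
  rw [valM_full this] at h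
  have : 1 ≤ 2 ^ M := Nat.one_le_two_pow
  omega

lemma valM_inj {a b : ℕ → Bool} {M : ℕ} (h : valM a M = valM b M) :
    ∀ k, 1 ≤ k → k ≤ M → a k = b k := by
  induction M with
  | zero => intro k h1 h2; omega
  | succ n ih =>
    rw [valM_succ, valM_succ] at h
    have ha := valM_lt a n
    have hb := valM_lt b n
    have htop : a (n + 1) = b (n + 1) := by
      rcases h1 : a (n + 1) with _ | _ <;> rcases h2 : b (n + 1) with _ | _ <;>
        rw [h1, h2] at h <;> simp at h ⊢ <;> omega
    have hval : valM a n = valM b n := by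
      rw [htop] at h; omega
    intro k hk1 hk2
    rcases Nat.lt_or_ge k (n + 1) with hlt | hge
    · exact ih hval k hk1 (by omega)
    · have : k = n + 1 := by omega
      rw [this]; exact htop

lemma valM_ext {a b : ℕ → Bool} {M : ℕ} (h : ∀ k, 1 ≤ k → k ≤ M → a k = b k) :
    valM a M = valM b M := by
  apply Finset.sum_congr rfl
  intro k hk
  simp only [Finset.mem_Icc] at hk
  rw [h k hk.1 hk.2]

lemma valM_top_lt {a b : ℕ → Bool} {t M : ℕ} (ht1 : 1 ≤ t) (htM : t ≤ M)
    (ha : a t = true) (hb : b t = false) (hag : ∀ k, t < k → k ≤ M → a k = b k) :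
    valM b M < valM a M := by
  induction M with
  | zero => omega
  | succ n ih =>
    rcases Nat.lt_or_ge t (n + 1) with hlt | hge
    · rw [valM_succ, valM_succ]
      have h1 : valM b n < valM a n := ih (by omega) (fun k hk1 hk2 => hag k hk1 (by omega))
      have h2 : a (n + 1) = b (n + 1) := hag (n + 1) hlt (le_refl _)
      rw [h2]
      omega
    · have ht : t = n + 1 := by omega
      subst ht
      rw [valM_succ, valM_succ, ha, hb]
      have := valM_lt b n
      simp
      omega

section Odo
variable {ω : ℕ → Bool}

lemma ell_spec (h : ∃ n, 1 ≤ n ∧ ω n = false) :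
    1 ≤ ell ω ∧ ω (ell ω) = false := Nat.sInf_mem h

lemma ell_le {n : ℕ} (h1 : 1 ≤ n) (h2 : ω n = false) : ell ω ≤ n :=
  Nat.sInf_le ⟨h1, h2⟩

lemma lt_ell_true {k : ℕ} (h1 : 1 ≤ k) (h2 : k < ell ω) : ω k = true := by
  rcases hk : ω k with _ | _
  · exact absurd (ell_le h1 hk) (by omega)
  · rfl

lemma odo_zero : odo ω 0 = ω 0 := by simp [odo]

lemma odo_lt {k : ℕ} (h1 : 1 ≤ k) (h2 : k < ell ω) : odo ω k = false := by
  simp only [odo, if_neg (by omega : ¬ k = 0), if_pos h2]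

lemma odo_at (h : 1 ≤ ell ω) : odo ω (ell ω) = true := by
  simp only [odo, if_neg (by omega : ¬ ell ω = 0), if_neg (lt_irrefl _), if_pos rfl]
  simp

lemma odo_gt {k : ℕ} (h : ell ω < k) : odo ω k = ω k := by
  simp only [odo, if_neg (by omega : ¬ k = 0), if_neg (by omega : ¬ k < ell ω),
    if_neg (by omega : ¬ k = ell ω)]

lemma icc_split {M L : ℕ} (hLM : L ≤ M) (f : ℕ → ℤ) :
    ∑ k ∈ Finset.Icc 1 M, f k = ∑ k ∈ Finset.Icc 1 L, f k + ∑ k ∈ Finset.Icc (L+1) M, f k := by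
  have h := Finset.sum_Ioc_consecutive f (by omega : (0:ℕ) ≤ L) hLM
  rw [← Finset.Icc_add_one_left_eq_Ioc, ← Finset.Icc_add_one_left_eq_Ioc, ← Finset.Icc_add_one_left_eq_Ioc] at h
  simp only [Nat.succ_eq_add_one, Nat.zero_add] at h
  linarith

lemma icc_split_nat {M L : ℕ} (hLM : L ≤ M) (f : ℕ → ℕ) :
    ∑ k ∈ Finset.Icc 1 M, f k = ∑ k ∈ Finset.Icc 1 L, f k + ∑ k ∈ Finset.Icc (L+1) M, f k := by
  have h := Finset.sum_Ioc_consecutive f (by omega : (0:ℕ) ≤ L) hLM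
  rw [← Finset.Icc_add_one_left_eq_Ioc, ← Finset.Icc_add_one_left_eq_Ioc, ← Finset.Icc_add_one_left_eq_Ioc] at h
  simp only [Nat.succ_eq_add_one, Nat.zero_add] at h
  omega

/-- Core step lemma. -/
lemma odo_step (q : ℕ → ℕ) {M : ℕ} (h : ∃ k, 1 ≤ k ∧ k ≤ M ∧ ω k = false) :
    valM (odo ω) M = valM ω M + 1 ∧ (∀ k, M < k → odo ω k = ω k) ∧
      phi q ω = ∑ k ∈ Finset.Icc 1 M, (((odo ω k).toNat : ℤ) - ((ω k).toNat : ℤ)) * q k := by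
  obtain ⟨m, hm1, hmM, hmf⟩ := h
  obtain ⟨hL1, hLf⟩ := ell_spec ⟨m, hm1, hmf⟩
  have hLM : ell ω ≤ M := le_trans (ell_le hm1 hmf) hmM
  have htail : ∀ k, M < k → odo ω k = ω k := fun k hk => odo_gt (by omega)
  refine ⟨?_, htail, ?_⟩
  · -- value increases by one
    unfold valM
    rw [icc_split_nat hLM, icc_split_nat hLM]
    have htt : ∑ k ∈ Finset.Icc (ell ω + 1) M, (odo ω k).toNat * 2 ^ (k-1)
        = ∑ k ∈ Finset.Icc (ell ω + 1) M, (ω k).toNat * 2 ^ (k-1) := by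
      apply Finset.sum_congr rfl
      intro k hk
      simp only [Finset.mem_Icc] at hk
      rw [odo_gt (by omega)]
    rw [htt]
    have hlow : ∑ k ∈ Finset.Icc 1 (ell ω), (odo ω k).toNat * 2 ^ (k-1) = 2 ^ (ell ω - 1) := by
      rw [show ell ω = (ell ω - 1)+1 by omega, Finset.sum_Icc_succ_top (by omega)]
      rw [show (ell ω - 1)+1 = ell ω by omega]
      have h1 : ∑ k ∈ Finset.Icc 1 (ell ω - 1), (odo ω k).toNat * 2 ^ (k-1) = 0 := by
        apply Finset.sum_eq_zero
        intro k hk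
        simp only [Finset.mem_Icc] at hk
        rw [odo_lt hk.1 (by omega)]
        simp
      rw [h1, odo_at hL1]
      simp
    have hlow2 : ∑ k ∈ Finset.Icc 1 (ell ω), (ω k).toNat * 2 ^ (k-1) = 2 ^ (ell ω - 1) - 1 := by
      rw [show ell ω = (ell ω - 1)+1 by omega, Finset.sum_Icc_succ_top (by omega)]
      rw [show (ell ω - 1)+1 = ell ω by omega]
      have h1 : ∑ k ∈ Finset.Icc 1 (ell ω - 1), (ω k).toNat * 2 ^ (k-1)
          = ∑ k ∈ Finset.Icc 1 (ell ω - 1), 2 ^ (k-1) := by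
        apply Finset.sum_congr rfl
        intro k hk
        simp only [Finset.mem_Icc] at hk
        rw [lt_ell_true (ω := ω) hk.1 (by omega)]
        simp
      rw [h1, geomIcc, hLf]
      simp
    rw [hlow, hlow2]
    have : 1 ≤ 2 ^ (ell ω - 1) := Nat.one_le_two_pow
    omega
  · -- phi formula
    rw [icc_split hLM]
    have htt : ∑ k ∈ Finset.Icc (ell ω + 1) M,
        (((odo ω k).toNat : ℤ) - ((ω k).toNat : ℤ)) * q k = 0 := by
      apply Finset.sum_eq_zero
      intro k hk
      simp only [Finset.mem_Icc] at hk
      rw [odo_gt (by omega)]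
      ring
    rw [htt, add_zero]
    rw [show ell ω = (ell ω - 1)+1 by omega, Finset.sum_Icc_succ_top (by omega),
      show (ell ω - 1)+1 = ell ω by omega]
    have h1 : ∑ k ∈ Finset.Icc 1 (ell ω - 1), (((odo ω k).toNat : ℤ) - ((ω k).toNat : ℤ)) * q k
        = ∑ k ∈ Finset.Icc 1 (ell ω - 1), (-(q k : ℤ)) := by
      apply Finset.sum_congr rfl
      intro k hk
      simp only [Finset.mem_Icc] at hk
      rw [odo_lt hk.1 (by omega), lt_ell_true (ω := ω) hk.1 (by omega)]
      simp
    rw [h1, odo_at hL1, hLf]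
    simp [phi]
    ring

end Odo

lemma odo_iter_zero (ω : ℕ → Bool) (N : ℕ) : odo^[N] ω 0 = ω 0 := by
  induction N with
  | zero => simp
  | succ n ih => rw [Function.iterate_succ_apply', odo_zero, ih]

/-- Iterated step lemma. -/
lemma odo_iter (q : ℕ → ℕ) (ω : ℕ → Bool) {M : ℕ} (N : ℕ)
    (hv : valM ω M + N < 2 ^ M) :
    valM (odo^[N] ω) M = valM ω M + N ∧ (∀ k, M < k → odo^[N] ω k = ω k) ∧
      phiN q N ω = ∑ k ∈ Finset.Icc 1 M,
        (((odo^[N] ω k).toNat : ℤ) - ((ω k).toNat : ℤ)) * q k := by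
  induction N with
  | zero =>
    refine ⟨by simp, by simp, ?_⟩
    simp [phiN]
  | succ n ih =>
    obtain ⟨ihv, ihtail, ihphi⟩ := ih (by omega)
    set σ := odo^[n] ω with hσ
    have hσv : valM σ M + 1 < 2 ^ M := by omega
    have hex : ∃ k, 1 ≤ k ∧ k ≤ M ∧ σ k = false := exists_false_of_valM σ M hσv
    obtain ⟨hstep_v, hstep_tail, hstep_phi⟩ := odo_step (ω := σ) q hex
    have hit : odo^[n+1] ω = odo σ := by
      rw [hσ, ← Function.iterate_succ_apply' odo n ω]
    refine ⟨?_, ?_, ?_⟩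
    · rw [hit, hstep_v, ihv]; omega
    · intro k hk
      rw [hit, hstep_tail k hk, ihtail k hk]
    · have hphiN : phiN q (n+1) ω = phiN q n ω + phi q σ := by
        unfold phiN
        rw [Finset.sum_range_succ]
      rw [hphiN, ihphi, hstep_phi, hit, ← Finset.sum_add_distrib]
      apply Finset.sum_congr rfl
      intro k _
      ring

lemma toNat_diff_cases (a b : Bool) :
    ((a.toNat : ℤ) - b.toNat = -1 ∨ (a.toNat : ℤ) - b.toNat = 0 ∨ (a.toNat : ℤ) - b.toNat = 1) := by
  rcases a with _ | _ <;> rcases b with _ | _ <;> simp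

lemma toNat_diff_eq_zero {a b : Bool} (h : ((a.toNat : ℤ) - b.toNat) = 0) : a = b := by
  rcases a with _ | _ <;> rcases b with _ | _ <;> simp_all

/-- Forward lemma: every Birkhoff sum of a point with infinitely many zeros
is `Nval q ε` for an explicit `ε ∈ ℰ⁺`. -/
lemma forward (q : ℕ → ℕ) (ω : ℕ → Bool)
    (hinf : ∀ m, ∃ k, m ≤ k ∧ 1 ≤ k ∧ ω k = false) {N : ℕ} (hN : 1 ≤ N) :
    ∃ ε : ℕ → ℤ, IsEplus ε ∧ Nval q ε = phiN q N ω ∧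
      ∀ k, ε k = ((odo^[N] ω k).toNat : ℤ) - ((ω k).toNat : ℤ) := by
  obtain ⟨M, hNM, hM1, hMf⟩ := hinf N
  have hvtop : valM ω M = valM ω (M-1) := by
    rw [show M = (M-1)+1 by omega, valM_succ, show (M-1)+1 = M by omega, hMf]
    simp
  have hMle : M ≤ 2 ^ (M-1) := by
    have := Nat.lt_two_pow_self (n := M-1)
    omega
  have hv : valM ω M + N < 2 ^ M := by
    have h1 : valM ω (M-1) < 2 ^ (M-1) := valM_lt ω (M-1)
    have h2 : 2 ^ M = 2 ^ (M-1) + 2 ^ (M-1) := by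
      have hm : M - 1 + 1 = M := by omega
      conv_lhs => rw [← hm, pow_succ]
      ring
    omega
  obtain ⟨hval, htail, hphi⟩ := odo_iter q ω N hv
  refine ⟨fun k => ((odo^[N] ω k).toNat : ℤ) - ((ω k).toNat : ℤ), ?_, ?_, fun k => rfl⟩
  · -- IsEplus
    set ε : ℕ → ℤ := fun k => ((odo^[N] ω k).toNat : ℤ) - ((ω k).toNat : ℤ) with hεdef
    have hε0 : ε 0 = 0 := by simp [hεdef, odo_iter_zero]
    have hεtail : ∀ k, M < k → ε k = 0 := by
      intro k hk
      simp [hεdef, htail k hk]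
    have hsupp : Function.support ε ⊆ ↑(Finset.Icc 1 M) := by
      intro k hk
      simp only [Function.mem_support] at hk
      simp only [Finset.coe_Icc, Set.mem_Icc]
      constructor
      · by_contra h0
        exact hk (by rw [show k = 0 by omega]; exact hε0)
      · by_contra h0
        exact hk (hεtail k (by omega))
    have hfin : (Function.support ε).Finite :=
      Set.Finite.subset (Finset.Icc 1 M).finite_toSet hsupp
    have hvals : ∀ k, ε k = -1 ∨ ε k = 0 ∨ ε k = 1 := fun k => toNat_diff_cases _ _
    have hne : ε ≠ 0 := by
      intro h0
      have : ∀ k, 1 ≤ k → k ≤ M → odo^[N] ω k = ω k := by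
        intro k _ _
        exact toNat_diff_eq_zero (congrFun h0 k)
      have := valM_ext this
      omega
    have hksupp : kap ε ∈ Function.support ε := by
      apply Nat.sSup_mem
      · rw [Function.support_nonempty_iff]
        exact hne
      · exact hfin.bddAbove
    have hk1 : 1 ≤ kap ε ∧ kap ε ≤ M := by
      have := hsupp hksupp
      simpa using this
    have habove : ∀ k, kap ε < k → ε k = 0 := by
      intro k hk
      by_contra h0
      have : k ≤ kap ε := le_csSup hfin.bddAbove h0
      omega
    refine ⟨⟨hε0, hvals, hfin⟩, hne, ?_⟩
    rcases hvals (kap ε) with hm1 | hm0 | hp1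
    · -- impossible: top change is 1 → 0
      exfalso
      have hωk : ω (kap ε) = true ∧ odo^[N] ω (kap ε) = false := by
        have := hm1
        rw [hεdef] at this
        simp only at this
        rcases h1 : odo^[N] ω (kap ε) with _ | _ <;> rcases h2 : ω (kap ε) with _ | _ <;>
          rw [h1, h2] at this <;> simp_all
      have hlt := valM_top_lt hk1.1 hk1.2 hωk.1 hωk.2
        (fun k hka hkM => (toNat_diff_eq_zero (habove k hka)).symm)
      omega
    · exact absurd hm0 (Function.mem_support.mp hksupp)
    · exact hp1
  · -- Nval computation
    have hsupp2 : Function.support (fun k => (((odo^[N] ω k).toNat : ℤ) - ((ω k).toNat : ℤ)) * q k)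
        ⊆ ↑(Finset.Icc 1 M) := by
      intro k hk
      simp only [Function.mem_support] at hk
      simp only [Finset.coe_Icc, Set.mem_Icc]
      constructor
      · by_contra h0
        apply hk
        rw [show k = 0 by omega]
        rw [odo_iter_zero]
        ring
      · by_contra h0
        apply hk
        rw [htail k (by omega)]
        ring
    rw [Nval, finsum_eq_finset_sum_of_support_subset _ hsupp2, hphi]

/-- Backward lemma: each cylinder point realizes `Nval q ε` as a Birkhoff sum. -/
lemma backward (q : ℕ → ℕ) (ε : ℕ → ℤ) (hε : IsEplus ε) (ω : ℕ → Bool)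
    (hcyl : ∀ k, (ε k = 1 → ω k = false) ∧ (ε k = -1 → ω k = true)) :
    ∃ N : ℕ, 1 ≤ N ∧ phiN q N ω = Nval q ε := by
  obtain ⟨⟨hε0, hvals, hfin⟩, hne, hκ1⟩ := hε
  set κ := kap ε with hκdef
  have hκpos : 1 ≤ κ := by
    rcases Nat.eq_zero_or_pos κ with h | h
    · rw [h] at hκ1; rw [hε0] at hκ1; omega
    · omega
  have habove : ∀ k, κ < k → ε k = 0 := by
    intro k hk
    by_contra h0
    have : k ≤ κ := le_csSup hfin.bddAbove h0
    omega
  -- the target point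
  set ω' : ℕ → Bool := fun k => if ε k = 1 then true else if ε k = -1 then false else ω k
    with hω'def
  have hdiff : ∀ k, ((ω' k).toNat : ℤ) - ((ω k).toNat : ℤ) = ε k := by
    intro k
    rcases hvals k with hm | h0 | hp
    · rw [hω'def]
      simp only [hm]
      rw [(hcyl k).2 hm]
      norm_num
    · rw [hω'def]
      simp only [h0]
      norm_num
    · rw [hω'def]
      simp only [hp]
      rw [(hcyl k).1 hp]
      norm_num
  have hsame : ∀ k, ε k = 0 → ω' k = ω k := by
    intro k h0
    rw [hω'def]
    simp only [h0]
    norm_num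
  have hωκ : ω κ = false := (hcyl κ).1 hκ1
  have hω'κ : ω' κ = true := by rw [hω'def]; simp only [hκ1]; norm_num
  have hlt : valM ω κ < valM ω' κ :=
    valM_top_lt hκpos (le_refl κ) hω'κ hωκ (fun k hk1 hk2 => by omega)
  set N := valM ω' κ - valM ω κ with hNdef
  have hN1 : 1 ≤ N := by omega
  have hveq : valM ω κ + N = valM ω' κ := by omega
  have hv : valM ω κ + N < 2 ^ κ := by
    have := valM_lt ω' κ
    omega
  obtain ⟨hval, htail, hphi⟩ := odo_iter q ω N hv
  refine ⟨N, hN1, ?_⟩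
  have hcoords : ∀ k, 1 ≤ k → k ≤ κ → odo^[N] ω k = ω' k := by
    apply valM_inj
    rw [hval, hveq]
  have hNval : Nval q ε = ∑ k ∈ Finset.Icc 1 κ, ε k * (q k : ℤ) := by
    apply finsum_eq_finset_sum_of_support_subset
    intro k hk
    simp only [Function.mem_support] at hk
    simp only [Finset.coe_Icc, Set.mem_Icc]
    constructor
    · by_contra h0
      apply hk
      rw [show k = 0 by omega, hε0]
      ring
    · by_contra h0
      apply hk
      rw [habove k (by omega)]
      ring
  rw [hphi, hNval]
  apply Finset.sum_congr rfl
  intro k hk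
  simp only [Finset.mem_Icc] at hk
  rw [hcoords k hk.1 hk.2, hdiff k]

/-- Injectivity of `Nval` on `ℰ` for super growth sequences. -/
lemma nval_inj (q : ℕ → ℕ) (hq : IsSuperGrowth q) {ε ε' : ℕ → ℤ}
    (hε : IsEps ε) (hε' : IsEps ε') (h : Nval q ε = Nval q ε') : ε = ε' := by
  obtain ⟨hε0, hvals, hfin⟩ := hε
  obtain ⟨hε0', hvals', hfin'⟩ := hε'
  by_contra hne
  set δ : ℕ → ℤ := fun k => ε k - ε' k with hδdef
  have hδfin : (Function.support δ).Finite := by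
    apply Set.Finite.subset (hfin.union hfin')
    intro k hk
    simp only [Function.mem_support, hδdef] at hk
    by_contra hc
    simp only [Set.mem_union, Function.mem_support, not_or, not_not] at hc
    rw [hc.1, hc.2] at hk
    simp at hk
  have hδnon : (Function.support δ).Nonempty := by
    obtain ⟨k, hk⟩ := Function.ne_iff.mp hne
    exact ⟨k, sub_ne_zero_of_ne hk⟩
  set t := sSup (Function.support δ) with htdef
  have htmem : t ∈ Function.support δ := Nat.sSup_mem hδnon hδfin.bddAbove
  have hδt : δ t ≠ 0 := htmem
  have ht1 : 1 ≤ t := by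
    rcases Nat.eq_zero_or_pos t with h0 | h
    · exfalso; apply hδt; rw [h0, hδdef]; simp [hε0, hε0']
    · omega
  have habove : ∀ k, t < k → δ k = 0 := by
    intro k hk
    by_contra h0
    have : k ≤ t := le_csSup hδfin.bddAbove h0
    omega
  -- the weighted sum of δ vanishes
  have hsum0 : ∑ k ∈ Finset.Icc 1 t, δ k * (q k : ℤ) = 0 := by
    have hfs : ∑ᶠ k, δ k * (q k : ℤ) = ∑ k ∈ Finset.Icc 1 t, δ k * (q k : ℤ) := by
      apply finsum_eq_finset_sum_of_support_subset
      intro k hk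
      simp only [Function.mem_support] at hk
      simp only [Finset.coe_Icc, Set.mem_Icc]
      constructor
      · by_contra h0
        apply hk
        have : δ k = 0 := by rw [show k = 0 by omega, hδdef]; simp [hε0, hε0']
        rw [this]; ring
      · by_contra h0
        apply hk
        rw [habove k (by omega)]; ring
    have hδq : ∑ᶠ k, δ k * (q k : ℤ) = Nval q ε - Nval q ε' := by
      rw [Nval, Nval, ← finsum_sub_distrib]
      · apply finsum_congr
        intro k
        rw [hδdef]
        ring
      · apply Set.Finite.subset hfin
        intro k hk
        simp only [Function.mem_support] at hk ⊢
        intro h0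
        apply hk
        rw [h0]; ring
      · apply Set.Finite.subset hfin'
        intro k hk
        simp only [Function.mem_support] at hk ⊢
        intro h0
        apply hk
        rw [h0]; ring
    rw [← hfs, hδq, h]
    ring
  rw [show t = (t-1)+1 by omega, Finset.sum_Icc_succ_top (by omega),
    show (t-1)+1 = t by omega] at hsum0
  have hkey : δ t * (q t : ℤ) = -∑ k ∈ Finset.Icc 1 (t-1), δ k * (q k : ℤ) := by linarith
  have habs2 : ∀ k, |δ k| ≤ 2 := by
    intro k
    rcases hvals k with h1 | h1 | h1 <;> rcases hvals' k with h2 | h2 | h2 <;>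
      (rw [hδdef]; simp only [h1, h2]; norm_num)
  have hqpos : (0:ℤ) < q t := by exact_mod_cast hq.1 t ht1
  have hbound : (q t : ℤ) ≤ |δ t * (q t : ℤ)| := by
    rw [abs_mul, abs_of_pos hqpos]
    have := Int.one_le_abs hδt
    nlinarith
  have hchain : |∑ k ∈ Finset.Icc 1 (t-1), δ k * (q k : ℤ)|
      ≤ 2 * ∑ k ∈ Finset.Icc 1 (t-1), (q k : ℤ) := by
    calc |∑ k ∈ Finset.Icc 1 (t-1), δ k * (q k : ℤ)|
        ≤ ∑ k ∈ Finset.Icc 1 (t-1), |δ k * (q k : ℤ)| := Finset.abs_sum_le_sum_abs _ _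
      _ ≤ ∑ k ∈ Finset.Icc 1 (t-1), 2 * (q k : ℤ) := by
          apply Finset.sum_le_sum
          intro k _
          rw [abs_mul, abs_of_nonneg (by positivity : (0:ℤ) ≤ (q k : ℤ))]
          have := habs2 k
          nlinarith [Int.ofNat_nonneg (q k)]
      _ = 2 * ∑ k ∈ Finset.Icc 1 (t-1), (q k : ℤ) := by rw [Finset.mul_sum]
  have hsg : 2 * ∑ k ∈ Finset.Icc 1 (t-1), (q k : ℤ) < (q t : ℤ) := by
    have := hq.2.2 t ht1
    push_cast at this ⊢
    exact_mod_cast this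
  rw [hkey, abs_neg] at hbound
  linarith

/-- The set of points with finitely many zeros is null. -/
lemma null_finitely_many_zeros (P : Measure (ℕ → Bool))
    (hP : ∀ (s : Finset ℕ) (v : ℕ → Bool),
      P {ω : ℕ → Bool | ∀ i ∈ s, ω i = v i} = (1 / 2 : ENNReal) ^ s.card) :
    P {ω : ℕ → Bool | ∃ m, ∀ k, m ≤ k → ω k = true} = 0 := by
  have hU : {ω : ℕ → Bool | ∃ m, ∀ k, m ≤ k → ω k = true}
      = ⋃ m : ℕ, {ω : ℕ → Bool | ∀ k, m ≤ k → ω k = true} := by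
    ext ω; simp
  rw [hU, measure_iUnion_null_iff]
  intro m
  have hsub : ∀ j : ℕ, {ω : ℕ → Bool | ∀ k, m ≤ k → ω k = true}
      ⊆ {ω : ℕ → Bool | ∀ i ∈ Finset.Icc m (m + j), ω i = (fun _ => true) i} := by
    intro j ω hω i hi
    simp only [Finset.mem_Icc] at hi
    exact hω i hi.1
  have hbound : ∀ j : ℕ, P {ω : ℕ → Bool | ∀ k, m ≤ k → ω k = true} ≤ (1/2 : ENNReal) ^ j := by
    intro j
    calc P {ω : ℕ → Bool | ∀ k, m ≤ k → ω k = true}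
        ≤ P {ω : ℕ → Bool | ∀ i ∈ Finset.Icc m (m + j), ω i = (fun _ => true) i} :=
          measure_mono (hsub j)
      _ = (1/2 : ENNReal) ^ (Finset.Icc m (m + j)).card := hP _ _
      _ = (1/2 : ENNReal) ^ (j + 1) := by rw [Nat.card_Icc]; congr 1; omega
      _ ≤ (1/2 : ENNReal) ^ j :=
          pow_le_pow_of_le_one (by norm_num) (by norm_num) (by omega)
  have htend : Filter.Tendsto (fun j : ℕ => (1/2 : ENNReal) ^ j) Filter.atTop (nhds 0) :=
    ENNReal.tendsto_pow_atTop_nhds_zero_of_lt_one (by norm_num)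
  have := ge_of_tendsto' htend hbound
  exact le_antisymm this zero_le

lemma diff_eq_one {a b : Bool} (h : (a.toNat : ℤ) - b.toNat = 1) : a = true ∧ b = false := by
  rcases a with _ | _ <;> rcases b with _ | _ <;> simp_all

lemma diff_eq_negone {a b : Bool} (h : (a.toNat : ℤ) - b.toNat = -1) : a = false ∧ b = true := by
  rcases a with _ | _ <;> rcases b with _ | _ <;> simp_all

theorem stmt1' (q : ℕ → ℕ) (hq : IsSuperGrowth q)
    (P : Measure (ℕ → Bool)) (hPprob : IsProbabilityMeasure P)
    (hP : ∀ (s : Finset ℕ) (v : ℕ → Bool),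
      P {ω : ℕ → Bool | ∀ i ∈ s, ω i = v i} = (1 / 2 : ENNReal) ^ s.card) :
    (∀ ε : ℕ → ℤ, IsEplus ε →
      P {ω : ℕ → Bool | ∃ N : ℕ, 1 ≤ N ∧ (phiN q N ω : ℤ) = Nval q ε}
        = (1 / 2 : ENNReal) ^ normE ε) ∧
    (∀ n : ℤ, 1 ≤ n → (∀ ε : ℕ → ℤ, IsEplus ε → Nval q ε ≠ n) →
      P {ω : ℕ → Bool | ∃ N : ℕ, 1 ≤ N ∧ phiN q N ω = n} = 0) := by
  set Z := {ω : ℕ → Bool | ∃ m, ∀ k, m ≤ k → ω k = true} with hZdef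
  have hZ0 : P Z = 0 := null_finitely_many_zeros P hP
  have hinf_of : ∀ ω : ℕ → Bool, ω ∉ Z → ∀ m, ∃ k, m ≤ k ∧ 1 ≤ k ∧ ω k = false := by
    intro ω hω m
    simp only [hZdef, Set.mem_setOf_eq, not_exists] at hω
    have h1 := hω (max m 1)
    push_neg at h1
    obtain ⟨k, hk1, hk2⟩ := h1
    refine ⟨k, le_trans (le_max_left _ _) hk1, le_trans (le_max_right _ _) hk1, ?_⟩
    rcases h : ω k with _ | _
    · rfl
    · exact absurd h hk2
  constructor
  · -- part 1
    intro ε hε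
    obtain ⟨⟨hε0, hvals, hfin⟩, hne, hκ1⟩ := hε
    set s := hfin.toFinset with hsdef
    set v : ℕ → Bool := fun k => if ε k = -1 then true else false with hvdef
    set C := {ω : ℕ → Bool | ∀ i ∈ s, ω i = v i} with hCdef
    set S := {ω : ℕ → Bool | ∃ N : ℕ, 1 ≤ N ∧ phiN q N ω = Nval q ε} with hSdef
    have hmem_s : ∀ k, k ∈ s ↔ ε k ≠ 0 := by
      intro k
      rw [hsdef, Set.Finite.mem_toFinset, Function.mem_support]
    have hCS : C ⊆ S := by
      intro ω hω
      refine backward q ε ⟨⟨hε0, hvals, hfin⟩, hne, hκ1⟩ ω ?_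
      intro k
      constructor
      · intro h1
        have := hω k ((hmem_s k).mpr (by rw [h1]; norm_num))
        rw [this, hvdef]
        simp only [h1]
        norm_num
      · intro h1
        have := hω k ((hmem_s k).mpr (by rw [h1]; norm_num))
        rw [this, hvdef]
        simp only [h1]
        simp
    have hSCZ : S ⊆ C ∪ Z := by
      intro ω hω
      by_cases hz : ω ∈ Z
      · exact Or.inr hz
      left
      obtain ⟨N, hN, hphi⟩ := hω
      obtain ⟨ε', hε', hNv, hεform⟩ := forward q ω (hinf_of ω hz) hN
      have heq : ε' = ε := nval_inj q hq hε'.1 ⟨hε0, hvals, hfin⟩ (by rw [hNv, hphi])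
      intro i hi
      have hi' : ε i ≠ 0 := (hmem_s i).mp hi
      have hεi : ε i = ((odo^[N] ω i).toNat : ℤ) - ((ω i).toNat : ℤ) := by
        rw [← heq]; exact hεform i
      rcases hvals i with hm | h0 | hp
      · rw [hvdef]
        simp only [hm]
        rw [hm] at hεi
        exact (diff_eq_negone hεi.symm).2 ▸ (by norm_num)
      · exact absurd h0 hi'
      · rw [hvdef]
        simp only [hp]
        rw [hp] at hεi
        have := (diff_eq_one hεi.symm).2
        rw [this]
        norm_num
    have hPC : P C = (1 / 2 : ENNReal) ^ normE ε := by
      have hnorm : normE ε = s.card := by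
        rw [normE]
        rw [finsum_eq_finset_sum_of_support_subset _
          (by
            intro k hk
            simp only [Function.mem_support] at hk
            rw [Finset.mem_coe, hmem_s k]
            intro h0
            apply hk
            rw [h0]
            rfl : Function.support (fun k => (ε k).natAbs) ⊆ ↑s)]
        rw [Finset.card_eq_sum_ones]
        apply Finset.sum_congr rfl
        intro k hk
        have := (hmem_s k).mp hk
        rcases hvals k with h1 | h1 | h1 <;> rw [h1] <;> first | rfl | exact absurd h1 this
      rw [hCdef, hP s v, hnorm]
    have h1 : P S ≤ P C := by
      calc P S ≤ P (C ∪ Z) := measure_mono hSCZ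
        _ ≤ P C + P Z := measure_union_le _ _
        _ = P C := by rw [hZ0, add_zero]
    have h2 : P C ≤ P S := measure_mono hCS
    rw [← hPC]
    exact le_antisymm h1 h2
  · -- part 2
    intro n hn hnot
    have hsub : {ω : ℕ → Bool | ∃ N : ℕ, 1 ≤ N ∧ phiN q N ω = n} ⊆ Z := by
      intro ω hω
      by_contra hz
      obtain ⟨N, hN, hphi⟩ := hω
      obtain ⟨ε', hε', hNv, _⟩ := forward q ω (hinf_of ω hz) hN
      exact hnot ε' hε' (by rw [hNv, hphi])
    exact le_antisymm (le_trans (measure_mono hsub) (le_of_eq hZ0)) zero_le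

/-- Let `q` be a super growth sequence, `φ` the associated dyadic
cocycle over the dyadic odometer on `Ω = {0,1}^{ℕ≥1}` and `P` the Bernoulli(1/2) product
measure (characterized by its values on cylinder sets). For every integer `n ≥ 1`: if
`n = N(ε)` with `ε ∈ ℰ⁺` then `P{ω : ∃ N ≥ 1, φ_N ω = n} = 2^{−‖ε‖}`, and if `n` is not
of this form then `P{ω : ∃ N ≥ 1, φ_N ω = n} = 0`. -/
theorem stmt1 (q : ℕ → ℕ) (hq : IsSuperGrowth q)
    (P : Measure (ℕ → Bool)) (hPprob : IsProbabilityMeasure P)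
    (hP : ∀ (s : Finset ℕ) (v : ℕ → Bool),
      P {ω : ℕ → Bool | ∀ i ∈ s, ω i = v i} = (1 / 2 : ENNReal) ^ s.card) :
    (∀ ε : ℕ → ℤ, IsEplus ε →
      P {ω : ℕ → Bool | ∃ N : ℕ, 1 ≤ N ∧ (phiN q N ω : ℤ) = Nval q ε}
        = (1 / 2 : ENNReal) ^ normE ε) ∧
    (∀ n : ℤ, 1 ≤ n → (∀ ε : ℕ → ℤ, IsEplus ε → Nval q ε ≠ n) →
      P {ω : ℕ → Bool | ∃ N : ℕ, 1 ≤ N ∧ phiN q N ω = n} = 0) :=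
  stmt1' q hq P hPprob hP
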